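/- Every maximal cyclic subgroup of the generalized quaternion group Q_{4n} (n ≥ 2) is either ⟨x⟩ (of order 2n) or isomorphic to Z₄, and the intersection of any two distinct maximal cyclic subgroups of Q_{4n} has order 2. -/

import Mathlib

/-- Closed neighborhood of a vertex. -/
def SimpleGraph.closedNbhd {V : Type*} (Γ : SimpleGraph V) (x : V) : Set V :=
  insert x (Γ.neighborSet x)

/-- `z` strongly resolves `x` and `y`: some shortest path from `z` to `x` contains `y`,
or some shortest path from `z` to `y` contains `x`. -/
def SimpleGraph.StronglyResolves {V : Type*} (Γ : SimpleGraph V) (z x y : V) : Prop :=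
  Γ.dist z y + Γ.dist y x = Γ.dist z x ∨ Γ.dist z x + Γ.dist x y = Γ.dist z y

def SimpleGraph.IsStrongResolvingSet {V : Type*} (Γ : SimpleGraph V) (S : Set V) : Prop :=
  ∀ x y : V, x ≠ y → ∃ z ∈ S, Γ.StronglyResolves z x y

/-- Strong metric dimension. -/
noncomputable def SimpleGraph.sdim {V : Type*} (Γ : SimpleGraph V) : ℕ :=
  sInf {k | ∃ S : Set V, Γ.IsStrongResolvingSet S ∧ S.ncard = k}

/-- Equivalence: equal closed neighborhoods. -/
def SimpleGraph.nbhdSetoid {V : Type*} (Γ : SimpleGraph V) : Setoid V :=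
  ⟨fun x y => Γ.closedNbhd x = Γ.closedNbhd y,
   ⟨fun _ => rfl, Eq.symm, Eq.trans⟩⟩

/-- The reduced graph of `Γ`. -/
def SimpleGraph.reduced {V : Type*} (Γ : SimpleGraph V) :
    SimpleGraph (Quotient Γ.nbhdSetoid) where
  Adj a b := a ≠ b ∧ ∃ x y : V,
    Quotient.mk Γ.nbhdSetoid x = a ∧ Quotient.mk Γ.nbhdSetoid y = b ∧ Γ.Adj x y
  symm := ⟨by
    rintro a b ⟨h, x, y, hx, hy, hxy⟩
    exact ⟨h.symm, y, x, hy, hx, hxy.symm⟩⟩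
  loopless := ⟨by rintro a ⟨h, -⟩; exact h rfl⟩

/-- The power graph of a group. -/
def powerGraph (G : Type*) [Group G] : SimpleGraph G where
  Adj x y := x ≠ y ∧ (x ∈ Subgroup.zpowers y ∨ y ∈ Subgroup.zpowers x)
  symm := ⟨by rintro x y ⟨h, h2⟩; exact ⟨h.symm, h2.symm⟩⟩
  loopless := ⟨by rintro x ⟨h, -⟩; exact h rfl⟩

/-- `σ n`: 1 if `n` is a prime power, otherwise the sum of the exponents in the
prime factorization of `n`. -/
noncomputable def sigmaExp (n : ℕ) : ℕ :=
  if IsPrimePow n then 1 else n.factorization.sum fun _ k => k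

/-- A maximal cyclic subgroup. -/
def IsMaxCyclic {G : Type*} [Group G] (M : Subgroup G) : Prop :=
  IsCyclic M ∧ ∀ N : Subgroup G, IsCyclic N → M ≤ N → M = N

/-- The set `𝓜_p` of maximal cyclic subgroups that are `p`-groups. -/
def maxCycP (p : ℕ) (G : Type*) [Group G] : Set (Subgroup G) :=
  {M | IsMaxCyclic M ∧ IsPGroup p M}

/-- The set of intersections of `M` with members of `𝓜_p`. -/
def inters (p : ℕ) {G : Type*} [Group G] (M : Subgroup G) : Set (Subgroup G) :=
  {C | ∃ N ∈ maxCycP p G, C = M ⊓ N}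

/-- `s_i`: the number of distinct intersections. -/
noncomputable def sNum (p : ℕ) {G : Type*} [Group G] (M : Subgroup G) : ℕ :=
  Nat.card (inters p M)

open Classical in
/-- `λ_i`, defined by `p ^ λ_i = max {|M ⊓ N| : N maximal cyclic, not a p-group}`
if maximal cyclic non-`p`-subgroups exist, and `λ_i = -1` otherwise. -/
noncomputable def lamInt (p : ℕ) {G : Type*} [Group G] (M : Subgroup G) : ℤ :=
  if {N : Subgroup G | IsMaxCyclic N ∧ ¬ IsPGroup p N}.Nonempty then
    (padicValNat p (sSup {k | ∃ N : Subgroup G, IsMaxCyclic N ∧ ¬ IsPGroup p N ∧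
        k = Nat.card ↥(M ⊓ N)}) : ℤ)
  else -1

/-- `s_i'`: the least index `u` with `p ^ λ_i < |C_{iu}|` in the chain of intersections;
equivalently one more than the number of intersections of cardinality at most `p ^ λ_i`. -/
noncomputable def sPrimeNum (p : ℕ) {G : Type*} [Group G] (M : Subgroup G) : ℕ :=
  Nat.card {C | C ∈ inters p M ∧ (Nat.card ↥C : ℚ) ≤ (p : ℚ) ^ (lamInt p M)} + 1

noncomputable def alphaTerm (p : ℕ) {G : Type*} [Group G] (M : Subgroup G) : ℤ :=
  (sNum p M : ℤ) - (sPrimeNum p M : ℤ) + lamInt p M + 2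

/-- `α_p = max_i (s_i - s_i' + λ_i + 2)`, with `α_p = 0` when `𝓜_p = ∅`. -/
noncomputable def alphaP (p : ℕ) (G : Type*) [Group G] : ℤ :=
  sSup (alphaTerm p '' maxCycP p G)

/-- A CP-group: every nonidentity element has prime power order. -/
def IsCPGroup (G : Type*) [Group G] : Prop :=
  ∀ g : G, g ≠ 1 → IsPrimePow (orderOf g)


section Aux

open Subgroup QuaternionGroup

lemma aux_isCyclic_zpowers {G : Type*} [Group G] (g : G) : IsCyclic ↥(zpowers g) := by
  refine ⟨⟨⟨g, mem_zpowers g⟩, fun x => ?_⟩⟩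
  obtain ⟨k, hk⟩ := x.2
  exact ⟨k, Subtype.ext (by simpa using hk)⟩

lemma aux_eq_zpowers {G : Type*} [Group G] (M : Subgroup G) (h : IsCyclic M) :
    ∃ g : G, M = zpowers g := by
  obtain ⟨⟨g, hg⟩, hgen⟩ := h.exists_generator
  refine ⟨g, le_antisymm (fun x hx => ?_) ((zpowers_le).2 hg)⟩
  obtain ⟨k, hk⟩ := hgen ⟨x, hx⟩
  exact ⟨k, by simpa using congrArg Subtype.val hk⟩

variable {n : ℕ}

lemma aux_a_mem (hn : 2 ≤ n) (i : ZMod (2 * n)) :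
    (a i : QuaternionGroup n) ∈ zpowers (a 1) :=
  haveI : NeZero (2 * n) := ⟨by omega⟩
  mem_zpowers_iff.mpr ⟨(i.val : ℤ), by rw [zpow_natCast, a_one_pow, ZMod.natCast_val, ZMod.cast_id]⟩

lemma aux_classify (hn : 2 ≤ n) (M : Subgroup (QuaternionGroup n))
    (hM : IsMaxCyclic M) :
    M = zpowers (a 1) ∨ ∃ i, M = zpowers (xa i) := by
  obtain ⟨g, rfl⟩ := aux_eq_zpowers M hM.1
  cases g with
  | a i =>
    left
    exact hM.2 _ (aux_isCyclic_zpowers _) ((zpowers_le).2 (aux_a_mem hn i))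
  | xa i => exact Or.inr ⟨i, rfl⟩

lemma aux_an_ne_one (hn : 2 ≤ n) : (a (n : ZMod (2 * n)) : QuaternionGroup n) ≠ 1 := by
  rw [QuaternionGroup.one_def]
  intro h
  have : (n : ZMod (2 * n)) = 0 := by injection h
  have := (ZMod.natCast_eq_zero_iff n (2 * n)).1 this
  have h2 := Nat.le_of_dvd (by omega) this
  omega

lemma aux_orderOf_an (hn : 2 ≤ n) :
    orderOf (a (n : ZMod (2 * n)) : QuaternionGroup n) = 2 := by
  refine orderOf_eq_prime ?_ (aux_an_ne_one hn)
  have : (a (n : ZMod (2 * n)) : QuaternionGroup n) ^ 2 = a ((2 * n : ℕ) : ZMod (2 * n)) := by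
    rw [← a_one_pow, ← a_one_pow, ← pow_mul]
    ring_nf
  rw [this, ZMod.natCast_self, ← QuaternionGroup.one_def]

lemma aux_an_mem (hn : 2 ≤ n) (M : Subgroup (QuaternionGroup n))
    (hM : IsMaxCyclic M) : (a (n : ZMod (2 * n)) : QuaternionGroup n) ∈ M := by
  rcases aux_classify hn M hM with h | ⟨i, h⟩
  · rw [h]; exact aux_a_mem hn _
  · rw [h]
    exact mem_zpowers_iff.mpr ⟨(2 : ℤ), by rw [zpow_two, ← sq, xa_sq]⟩

lemma aux_inf_card (hn : 2 ≤ n) (M N : Subgroup (QuaternionGroup n))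
    (hM : IsMaxCyclic M) (hN : IsMaxCyclic N) (hNe : M ≠ N) (j : ZMod (2 * n))
    (hNj : N = zpowers (xa j)) : Nat.card ↥(M ⊓ N) = 2 := by
  haveI : NeZero n := ⟨by omega⟩
  have hcardN : Nat.card N = 4 := by
    rw [hNj, Nat.card_zpowers, orderOf_xa]
  have hdvd : Nat.card ↥(M ⊓ N) ∣ 4 := hcardN ▸ Subgroup.card_dvd_of_le inf_le_right
  have hmem : (a (n : ZMod (2 * n)) : QuaternionGroup n) ∈ M ⊓ N :=
    ⟨aux_an_mem hn M hM, aux_an_mem hn N hN⟩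
  have h2 : 2 ∣ Nat.card ↥(M ⊓ N) := by
    rw [← aux_orderOf_an hn]
    exact Subgroup.orderOf_dvd_natCard _ hmem
  have hne4 : Nat.card ↥(M ⊓ N) ≠ 4 := by
    intro h4
    have : M ⊓ N = N :=
      Subgroup.eq_of_le_of_card_ge inf_le_right (by omega)
    exact hNe (hN.2 M hM.1 (this ▸ inf_le_left)).symm
  have hle : Nat.card ↥(M ⊓ N) ≤ 4 := Nat.le_of_dvd (by norm_num) hdvd
  interval_cases h : (Nat.card ↥(M ⊓ N)) <;> omega

end Aux

theorem stmt_15 (n : ℕ) (hn : 2 ≤ n) :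
    (∀ M : Subgroup (QuaternionGroup n), IsMaxCyclic M →
      M = Subgroup.zpowers (QuaternionGroup.a 1) ∨
        Nonempty (↥M ≃* Multiplicative (ZMod 4))) ∧
    Nat.card ↥(Subgroup.zpowers (QuaternionGroup.a (1 : ZMod (2 * n)))) = 2 * n ∧
    (∀ M N : Subgroup (QuaternionGroup n), IsMaxCyclic M → IsMaxCyclic N → M ≠ N →
      Nat.card ↥(M ⊓ N) = 2) := by
  haveI : NeZero n := ⟨by omega⟩
  refine ⟨?_, ?_, ?_⟩
  · intro M hM
    rcases aux_classify hn M hM with h | ⟨i, h⟩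
    · exact Or.inl h
    · right
      haveI : IsCyclic ↥M := hM.1
      refine ⟨mulEquivOfCyclicCardEq ?_⟩
      rw [h, Nat.card_zpowers, QuaternionGroup.orderOf_xa]
      simp [Nat.card_eq_fintype_card]
  · rw [Nat.card_zpowers, QuaternionGroup.orderOf_a_one]
  · intro M N hM hN hNe
    rcases aux_classify hn M hM with hMa | ⟨i, hMi⟩
    · rcases aux_classify hn N hN with hNa | ⟨j, hNj⟩
      · exact absurd (hMa.trans hNa.symm) hNe
      · exact aux_inf_card hn M N hM hN hNe j hNj
    · rw [inf_comm]
      exact aux_inf_card hn N M hN hM hNe.symm i hMi
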